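/- Let a, b ∈ L(H) be projections of rank one with a ≠ b and ab ≠ 0. If u is a self-adjoint tripotent with au + ua = u and au² + u²a = 2a, and θ ∈ (0, π/2) is such that exp(θ·G(a,u)) applied to a equals b, then cos²θ = ‖aba‖ (operator norm); equivalently θ = arccos(‖aba‖^{1/2}). In particular there is a unique v ∈ L(H) of the form v = θ·u with such u and θ ∈ (0, π/2) satisfying exp(G(a,v)) applied to a equals b. -/

import Mathlib

set_option synthInstance.maxHeartbeats 1000000
set_option maxHeartbeats 2000000
set_option linter.unusedSectionVars false


variable {H : Type*} [NormedAddCommGroup H] [InnerProductSpace ℂ H] [CompleteSpace H]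

/-- For a projection `a` and a self-adjoint `u` in `L(H)`, `G a u` is the bounded linear
operator on `L(H)` given by `z ↦ (ua - au)z - z(ua - au)`. -/
noncomputable def G (a u : H →L[ℂ] H) : (H →L[ℂ] H) →L[ℝ] (H →L[ℂ] H) :=
  ContinuousLinearMap.mul ℝ (H →L[ℂ] H) (u * a - a * u)
    - (ContinuousLinearMap.mul ℝ (H →L[ℂ] H)).flip (u * a - a * u)

lemma G_apply (a u z : H →L[ℂ] H) :
    G a u z = (u * a - a * u) * z - z * (u * a - a * u) := rfl

lemma G_smul (a u : H →L[ℂ] H) (t : ℝ) : G a (t • u) = t • G a u := by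
  have h : (t • u) * a - a * (t • u) = t • (u * a - a * u) := by
    rw [smul_mul_assoc, mul_smul_comm, smul_sub]
  unfold G
  rw [h, map_smul, map_smul, smul_sub]

section core
variable (a u : H →L[ℂ] H)

lemma h_aua (haidem : a * a = a) (h1 : a * u + u * a = u) : a * u * a = 0 := by
  have h := congrArg (fun z => a * z * a) h1
  simp only [add_mul, mul_add] at h
  have e1 : a * (a * u) * a = a * u * a := by rw [← mul_assoc, haidem]
  have e2 : a * (u * a) * a = a * u * a := by rw [← mul_assoc, mul_assoc (a*u) a a, haidem]
  rw [e1, e2] at h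
  linear_combination (norm := abel) h

lemma h_auua (haidem : a * a = a) (h2 : a * (u * u) + (u * u) * a = 2 • a) :
    a * (u * u) * a = a := by
  have h := congrArg (fun z => a * z * a) h2
  simp only [add_mul, mul_add, smul_add, two_smul] at h
  have e1 : a * (a * (u * u)) * a = a * (u * u) * a := by rw [← mul_assoc, haidem]
  have e2 : a * (u * u * a) * a = a * (u * u) * a := by
    rw [← mul_assoc, mul_assoc (a * (u*u)) a a, haidem]
  have e3 : a * (2 • a) * a = a + a := by
    rw [mul_smul_comm, smul_mul_assoc, haidem, haidem, two_smul]
  rw [e1, e2] at h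
  simp only [haidem] at h
  have h' : (2 : ℝ) • (a * (u * u) * a) = (2 : ℝ) • a := by
    rw [two_smul, two_smul]; exact h
  exact smul_right_injective _ (two_ne_zero) h'

lemma hGa (haidem : a * a = a) (h1 : a * u + u * a = u) : G a u a = u := by
  have haua := h_aua a u haidem h1
  rw [G_apply]
  have : (u * a - a * u) * a - a * (u * a - a * u)
      = u * (a * a) + (a * a) * u - (a * u * a + a * u * a) := by noncomm_ring
  rw [this, haidem, haua]
  linear_combination (norm := abel) h1

lemma hGu (haidem : a * a = a) (h2 : a * (u * u) + (u * u) * a = 2 • a) :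
    G a u u = (-2 : ℝ) • (a - u * a * u) := by
  rw [G_apply]
  have : (u * a - a * u) * u - u * (u * a - a * u)
      = u * a * u + u * a * u - (a * (u * u) + (u * u) * a) := by noncomm_ring
  rw [this, h2]
  match_scalars <;> norm_num

lemma hGuau (haidem : a * a = a) (h1 : a * u + u * a = u)
    (h2 : a * (u * u) + (u * u) * a = 2 • a) :
    G a u (u * a * u) = -u := by
  have haua := h_aua a u haidem h1
  have hauua := h_auua a u haidem h2
  rw [G_apply]
  have : (u * a - a * u) * (u * a * u) - (u * a * u) * (u * a - a * u)
      = u * (a * u * a) * u + u * (a * u * a) * u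
        - ((a * (u * u) * a) * u + u * (a * (u * u) * a)) := by noncomm_ring
  rw [this, haua, hauua]
  simp only [mul_zero, zero_mul, zero_add]
  linear_combination (norm := abel) -h1

lemma hGp (haidem : a * a = a) (h1 : a * u + u * a = u)
    (h2 : a * (u * u) + (u * u) * a = 2 • a) :
    G a u (a - u * a * u) = (2 : ℝ) • u := by
  rw [map_sub, hGa a u haidem h1, hGuau a u haidem h1 h2]
  match_scalars <;> norm_num
end core

section powers
variable (a u : H →L[ℂ] H) (θ : ℝ)

lemma T_apply (z : H →L[ℂ] H) : (θ • G a u) z = θ • (G a u z) := rfl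

lemma pow_key (haidem : a * a = a) (h1 : a * u + u * a = u)
    (h2 : a * (u * u) + (u * u) * a = 2 • a) : ∀ k : ℕ,
    ((θ • G a u) ^ (2 * k + 1)) a = ((-1) ^ k * (2 * θ) ^ (2 * k + 1) / 2) • u ∧
    ((θ • G a u) ^ (2 * k + 2)) a
      = ((-1) ^ (k + 1) * (2 * θ) ^ (2 * k + 2) / 2) • (a - u * a * u) := by
  have ea := hGa a u haidem h1
  have eu := hGu a u haidem h2
  have ep := hGp a u haidem h1 h2
  intro k
  induction k with
  | zero =>
    constructor
    · rw [pow_one]; simp only [T_apply, ea]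
      match_scalars <;> ring
    · have : (θ • G a u) ^ (2 * 0 + 2) = (θ • G a u) * (θ • G a u) ^ (2 * 0 + 1) := by
        rw [← pow_succ']
      rw [this, ContinuousLinearMap.mul_apply, pow_one]
      simp only [T_apply, map_smul, ea, eu]
      match_scalars <;> ring
  | succ k ih =>
    obtain ⟨ih1, ih2⟩ := ih
    have hodd : (θ • G a u) ^ (2 * (k + 1) + 1)
        = (θ • G a u) * (θ • G a u) ^ (2 * k + 2) := by
      rw [← pow_succ']; ring_nf
    have heven : (θ • G a u) ^ (2 * (k + 1) + 2)
        = (θ • G a u) * (θ • G a u) ^ (2 * (k + 1) + 1) := by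
      rw [← pow_succ']
    constructor
    · rw [hodd, ContinuousLinearMap.mul_apply, ih2]
      simp only [T_apply, map_smul, ep]
      match_scalars <;> ring
    · rw [heven, ContinuousLinearMap.mul_apply, hodd, ContinuousLinearMap.mul_apply, ih2]
      simp only [T_apply, map_smul, ep, eu]
      match_scalars <;> ring

end powers

lemma expG_apply (a u : H →L[ℂ] H) (θ : ℝ) (haidem : a * a = a)
    (h1 : a * u + u * a = u) (h2 : a * (u * u) + (u * u) * a = 2 • a) :
    NormedSpace.exp (θ • G a u) a
      = (Real.cos θ ^ 2) • a + (Real.sin θ * Real.cos θ) • u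
        + (Real.sin θ ^ 2) • (u * a * u) := by
  set T := θ • G a u with hT
  set p := a - u * a * u with hp
  have key := pow_key a u θ haidem h1 h2
  have hsum : HasSum (fun n : ℕ => ((n.factorial : ℝ))⁻¹ • ((T ^ n) a))
      (NormedSpace.exp T a) := by
    have h := NormedSpace.exp_series_hasSum_exp' (𝕂 := ℝ) T
    have h2' := (ContinuousLinearMap.apply ℝ (H →L[ℂ] H) a).hasSum h
    simpa using h2'
  have hodd : HasSum (fun k : ℕ => (((2 * k + 1).factorial : ℝ))⁻¹ • ((T ^ (2 * k + 1)) a))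
      ((Real.sin (2 * θ) / 2) • u) := by
    have h := ((Real.hasSum_sin (2 * θ)).div_const 2).smul_const u
    have hfun : (fun k : ℕ => (((2 * k + 1).factorial : ℝ))⁻¹ • ((T ^ (2 * k + 1)) a))
        = fun k : ℕ => ((-1) ^ k * (2 * θ) ^ (2 * k + 1) / ((2 * k + 1).factorial : ℝ) / 2) • u := by
      funext k
      rw [(key k).1, smul_smul]
      match_scalars <;> ring
    rw [hfun]
    exact h
  have heven : HasSum (fun k : ℕ => (((2 * k).factorial : ℝ))⁻¹ • ((T ^ (2 * k)) a))
      (((Real.cos (2 * θ) - 1) / 2) • p + a) := by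
    have hcos := Real.hasSum_cos (2 * θ)
    have hshift : HasSum (fun n : ℕ => (-1 : ℝ) ^ (n + 1) * (2 * θ) ^ (2 * (n + 1)) / ((2 * (n + 1)).factorial : ℝ))
        (Real.cos (2 * θ) - 1) := by
      have := (hasSum_nat_add_iff' (f := fun n : ℕ => (-1 : ℝ) ^ n * (2 * θ) ^ (2 * n) / ((2 * n).factorial : ℝ)) 1).mpr hcos
      simpa using this
    have h := (hshift.div_const 2).smul_const p
    have h' : HasSum (fun n : ℕ => (((2 * (n + 1)).factorial : ℝ))⁻¹ • ((T ^ (2 * (n + 1))) a))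
        (((Real.cos (2 * θ) - 1) / 2) • p) := by
      have hfun : (fun n : ℕ => (((2 * (n + 1)).factorial : ℝ))⁻¹ • ((T ^ (2 * (n + 1))) a))
          = fun n : ℕ => ((-1 : ℝ) ^ (n + 1) * (2 * θ) ^ (2 * (n + 1)) / ((2 * (n + 1)).factorial : ℝ) / 2) • p := by
        funext n
        rw [show 2 * (n + 1) = 2 * n + 2 by ring, (key n).2, smul_smul]
        match_scalars <;> ring
      rw [hfun]
      exact h
    have h'' : HasSum (fun k : ℕ => (((2 * k).factorial : ℝ))⁻¹ • ((T ^ (2 * k)) a))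
        (((Real.cos (2 * θ) - 1) / 2) • p
          + ∑ i ∈ Finset.range 1, (((2 * i).factorial : ℝ))⁻¹ • ((T ^ (2 * i)) a)) :=
      (hasSum_nat_add_iff 1).mp h'
    simpa using h''
  have hcomb := HasSum.even_add_odd
    (f := fun n : ℕ => ((n.factorial : ℝ))⁻¹ • ((T ^ n) a)) heven hodd
  have hval := hsum.unique hcomb
  rw [hval, Real.sin_two_mul, Real.cos_two_mul, hp]
  have hs2 : Real.sin θ ^ 2 = 1 - Real.cos θ ^ 2 := Real.sin_sq θ
  rw [hs2]
  module

lemma aba_form (a u : H →L[ℂ] H) (c d e : ℝ) (haidem : a * a = a) (haua : a * u * a = 0) :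
    a * (c • a + d • u + e • (u * a * u)) * a = c • a := by
  have h5 : a * (u * a * u) * a = 0 := by
    have : a * (u * a * u) * a = (a * u * a) * (u * a) := by noncomm_ring
    rw [this, haua, zero_mul]
  simp only [mul_add, add_mul, mul_smul_comm, smul_mul_assoc]
  rw [show a * a * a = a by rw [haidem, haidem], haua, h5]
  simp

lemma abba_form (a u : H →L[ℂ] H) (c d e : ℝ) (haidem : a * a = a)
    (haua : a * u * a = 0) (h1 : a * u + u * a = u) :
    a * (c • a + d • u + e • (u * a * u)) + (c • a + d • u + e • (u * a * u)) * a
      = (2 * c) • a + d • u := by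
  have h5 : a * (u * a * u) = 0 := by
    have : a * (u * a * u) = (a * u * a) * u := by noncomm_ring
    rw [this, haua, zero_mul]
  have h6 : (u * a * u) * a = 0 := by
    have : (u * a * u) * a = u * (a * u * a) := by noncomm_ring
    rw [this, haua, mul_zero]
  simp only [mul_add, add_mul, mul_smul_comm, smul_mul_assoc, haidem, h5, h6, smul_zero,
    add_zero]
  have h7 : d • u = d • (a * u) + d • (u * a) := by rw [← smul_add, h1]
  rw [h7]
  module

/-- Let `a, b ∈ L(H)` be rank-one projections with `a ≠ b`, `ab ≠ 0`.
If `u` is a self-adjoint tripotent with `au + ua = u` and `au² + u²a = 2a`, and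
`θ ∈ (0, π/2)` satisfies `exp(θ·G(a,u)) a = b`, then `cos²θ = ‖aba‖`, i.e.
`θ = arccos(√‖aba‖)`; and there is a unique `v = θ'·u'` of this form with
`exp(G(a,v)) a = b`. -/
theorem geodesic_angle_eq_arccos (a b u : H →L[ℂ] H) (θ : ℝ)
    (hasa : IsSelfAdjoint a) (haidem : a * a = a)
    (harank : Module.finrank ℂ (LinearMap.range (a : H →ₗ[ℂ] H)) = 1)
    (hbsa : IsSelfAdjoint b) (hbidem : b * b = b)
    (hbrank : Module.finrank ℂ (LinearMap.range (b : H →ₗ[ℂ] H)) = 1)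
    (hne : a ≠ b) (hab : a * b ≠ 0)
    (husa : IsSelfAdjoint u) (hu3 : u * u * u = u)
    (h1 : a * u + u * a = u) (h2 : a * (u * u) + (u * u) * a = 2 • a)
    (hθ0 : 0 < θ) (hθ1 : θ < Real.pi / 2)
    (hexp : NormedSpace.exp (θ • G a u) a = b) :
    Real.cos θ ^ 2 = ‖a * b * a‖ ∧
    θ = Real.arccos (Real.sqrt ‖a * b * a‖) ∧
    ∃! v : H →L[ℂ] H, ∃ (u' : H →L[ℂ] H) (θ' : ℝ),
      IsSelfAdjoint u' ∧ u' * u' * u' = u' ∧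
      a * u' + u' * a = u' ∧ a * (u' * u') + (u' * u') * a = 2 • a ∧
      0 < θ' ∧ θ' < Real.pi / 2 ∧ v = θ' • u' ∧
      NormedSpace.exp (G a v) a = b := by
  have haua := h_aua a u haidem h1
  have ha0 : a ≠ 0 := by
    rintro rfl
    have hr : LinearMap.range ((0 : H →L[ℂ] H) : H →ₗ[ℂ] H) = ⊥ := by
      ext x; simp [LinearMap.mem_range, eq_comm]
    rw [hr] at harank
    simp at harank
  have hna : ‖a‖ = 1 := by
    have hc : ‖star a * a‖ = ‖a‖ * ‖a‖ := CStarRing.norm_star_mul_self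
    rw [hasa.star_eq, haidem] at hc
    have h0 : ‖a‖ ≠ 0 := norm_ne_zero_iff.mpr ha0
    have : ‖a‖ * 1 = ‖a‖ * ‖a‖ := by rw [mul_one]; exact hc
    exact (mul_left_cancel₀ h0 this).symm
  have hb : b = (Real.cos θ ^ 2) • a + (Real.sin θ * Real.cos θ) • u
      + (Real.sin θ ^ 2) • (u * a * u) := by
    rw [← hexp, expG_apply a u θ haidem h1 h2]
  have haba : a * b * a = (Real.cos θ ^ 2) • a := by
    rw [hb]; exact aba_form a u _ _ _ haidem haua
  have hcos_pos : 0 < Real.cos θ :=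
    Real.cos_pos_of_mem_Ioo ⟨by linarith [Real.pi_pos], hθ1⟩
  have part1 : Real.cos θ ^ 2 = ‖a * b * a‖ := by
    rw [haba, norm_smul, hna, mul_one, Real.norm_eq_abs, abs_of_nonneg (by positivity)]
  have part2 : θ = Real.arccos (Real.sqrt ‖a * b * a‖) := by
    rw [← part1, Real.sqrt_sq hcos_pos.le, Real.arccos_cos hθ0.le (by linarith [Real.pi_pos])]
  refine ⟨part1, part2, ⟨θ • u, ⟨u, θ, husa, hu3, h1, h2, hθ0, hθ1, rfl, ?_⟩, ?_⟩⟩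
  · rw [G_smul]; exact hexp
  · rintro v ⟨u₂, θ₂, hu₂sa, hu₂3, h1₂, h2₂, hθ₂0, hθ₂1, rfl, hexp₂⟩
    rw [G_smul] at hexp₂
    have haua₂ := h_aua a u₂ haidem h1₂
    have hb₂ : b = (Real.cos θ₂ ^ 2) • a + (Real.sin θ₂ * Real.cos θ₂) • u₂
        + (Real.sin θ₂ ^ 2) • (u₂ * a * u₂) := by
      rw [← hexp₂, expG_apply a u₂ θ₂ haidem h1₂ h2₂]
    have haba₂ : a * b * a = (Real.cos θ₂ ^ 2) • a := by
      rw [hb₂]; exact aba_form a u₂ _ _ _ haidem haua₂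
    have hcos₂_pos : 0 < Real.cos θ₂ :=
      Real.cos_pos_of_mem_Ioo ⟨by linarith [Real.pi_pos], hθ₂1⟩
    have hsq : Real.cos θ₂ ^ 2 = Real.cos θ ^ 2 :=
      smul_left_injective ℝ ha0 (haba₂.symm.trans haba)
    have hceq : Real.cos θ₂ = Real.cos θ := by
      calc Real.cos θ₂ = Real.sqrt (Real.cos θ₂ ^ 2) := (Real.sqrt_sq hcos₂_pos.le).symm
        _ = Real.sqrt (Real.cos θ ^ 2) := by rw [hsq]
        _ = Real.cos θ := Real.sqrt_sq hcos_pos.le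
    have hθeq : θ₂ = θ :=
      Real.injOn_cos ⟨hθ₂0.le, by linarith [Real.pi_pos]⟩ ⟨hθ0.le, by linarith [Real.pi_pos]⟩ hceq
    rw [hθeq] at hb₂
    have e1 : a * b + b * a = (2 * Real.cos θ ^ 2) • a + (Real.sin θ * Real.cos θ) • u := by
      rw [hb]; exact abba_form a u _ _ _ haidem haua h1
    have e2 : a * b + b * a = (2 * Real.cos θ ^ 2) • a + (Real.sin θ * Real.cos θ) • u₂ := by
      rw [hb₂]; exact abba_form a u₂ _ _ _ haidem haua₂ h1₂
    have hsmul : (Real.sin θ * Real.cos θ) • u₂ = (Real.sin θ * Real.cos θ) • u :=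
      add_left_cancel (e2.symm.trans e1)
    have hsc : Real.sin θ * Real.cos θ ≠ 0 := by
      have hs : 0 < Real.sin θ :=
        Real.sin_pos_of_pos_of_lt_pi hθ0 (by linarith [Real.pi_pos])
      positivity
    have hueq : u₂ = u := smul_right_injective _ hsc hsmul
    rw [hθeq, hueq]
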